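/- arXiv:1504.00994 — 7 statements merged into one kernel-verified Lean document; each statement's English description precedes it below -/
import Mathlib

section
/- The A-algebra homomorphism ρ : A[G] → End_A(V) is surjective. -/
open TensorProduct

open Module

lemma burnside_two {K : Type} [Field K] [IsAlgClosed K] {V : Type} [AddCommGroup V] [Module K V]
    [FiniteDimensional K V] (h2 : Module.finrank K V = 2)
    {S : Set (Module.End K V)} (h1 : (1 : Module.End K V) ∈ S)
    (hmul : ∀ s ∈ S, ∀ t ∈ S, s * t ∈ S)
    (hS : ∀ W : Submodule K V, (∀ s ∈ S, ∀ x ∈ W, s x ∈ W) → W = ⊥ ∨ W = ⊤) :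
    Submodule.span K S = ⊤ := by
  classical
  set T : Submodule K (Module.End K V) := Submodule.span K S with hT
  have hTmul : ∀ x ∈ T, ∀ y ∈ T, x * y ∈ T := by
    intro x hx y hy
    have h := Submodule.mul_mem_mul hx hy
    rw [hT, Submodule.span_mul_span] at h
    exact Submodule.span_le.mpr
      (fun z hz => by
        rw [Set.mem_mul] at hz
        obtain ⟨a, ha, b, hb, rfl⟩ := hz
        exact Submodule.subset_span (hmul a ha b hb)) h
  have hnt : Nontrivial V := by
    have : 0 < Module.finrank K V := by omega
    exact Module.nontrivial_of_finrank_pos this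
  -- a non-scalar element of S
  have hexists : ∃ s ∈ S, ∀ c : K, s ≠ c • (1 : Module.End K V) := by
    by_contra h
    push_neg at h
    obtain ⟨x, hx⟩ := exists_ne (0 : V)
    have hinv : ∀ s ∈ S, ∀ y ∈ Submodule.span K {x}, s y ∈ Submodule.span K {x} := by
      intro s hs y hy
      obtain ⟨c, rfl⟩ := h s hs
      have hcy : (c • (1 : Module.End K V)) y = c • y := by simp
      rw [hcy]
      exact Submodule.smul_mem _ c hy
    rcases hS (Submodule.span K {x}) hinv with hbot | htop
    · refine hx ?_
      have hx' : x ∈ Submodule.span K ({x} : Set V) := Submodule.mem_span_singleton_self x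
      rw [hbot] at hx'
      simpa using hx'
    · have h1' := finrank_span_singleton (K := K) hx
      rw [show (Submodule.span K {x} : Submodule K V) = K ∙ x from rfl, htop, finrank_top] at h1'
      omega
  obtain ⟨s, hsS, hs⟩ := hexists
  obtain ⟨μ, hμ⟩ := Module.End.exists_eigenvalue s
  obtain ⟨v, hv⟩ := hμ.exists_hasEigenvector
  set n : Module.End K V := s - μ • 1 with hn_def
  have hnT : n ∈ T := Submodule.sub_mem _ (Submodule.subset_span hsS)
    (Submodule.smul_mem _ _ (Submodule.subset_span h1))
  have hnv : n v = 0 := by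
    have := hv.apply_eq_smul
    simp [hn_def, this]
  have hn0 : n ≠ 0 := by
    intro h
    rw [hn_def, sub_eq_zero] at h
    exact hs μ h
  obtain ⟨w, hw⟩ : ∃ w, n w ≠ 0 := by
    by_contra h
    push_neg at h
    exact hn0 (LinearMap.ext fun x => h x)
  set u := n w with hu_def
  have hu0 : u ≠ 0 := hw
  have hli : LinearIndependent K ![v, w] := by
    rw [LinearIndependent.pair_iff]
    intro a b hab
    have h1' : n (a • v + b • w) = 0 := by rw [hab]; simp
    rw [map_add, map_smul, map_smul, hnv, smul_zero, zero_add] at h1'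
    have hb : b = 0 := by
      by_contra hb
      exact hw (by simpa [hb] using (smul_eq_zero.mp h1').resolve_left hb)
    subst hb
    rw [zero_smul, add_zero] at hab
    exact ⟨(smul_eq_zero.mp hab).resolve_right hv.2, rfl⟩
  let B : Basis (Fin 2) K V := basisOfLinearIndependentOfCardEqFinrank hli (by simp [h2])
  have hB0 : B 0 = v := by
    simp [B, coe_basisOfLinearIndependentOfCardEqFinrank]
  have hB1 : B 1 = w := by
    simp [B, coe_basisOfLinearIndependentOfCardEqFinrank]
  set φ : V →ₗ[K] K := B.coord 1 with hφ_def
  set ψ : V →ₗ[K] K := B.coord 0 with hψ_def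
  have hφv : φ v = 0 := by rw [← hB0]; simp [hφ_def, Basis.coord_apply]
  have hφw : φ w = 1 := by rw [← hB1]; simp [hφ_def, Basis.coord_apply]
  have hψv : ψ v = 1 := by rw [← hB0]; simp [hψ_def, Basis.coord_apply]
  have hψw : ψ w = 0 := by rw [← hB1]; simp [hψ_def, Basis.coord_apply]
  have hdecomp : ∀ z : V, ψ z • v + φ z • w = z := by
    intro z
    have := B.sum_repr z
    rw [Fin.sum_univ_two, hB0, hB1] at this
    simpa [hψ_def, hφ_def, Basis.coord_apply] using this
  have hn_eq : ∀ x, n x = φ x • u := by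
    intro x
    conv_lhs => rw [← hdecomp x]
    rw [map_add, map_smul, map_smul, hnv, smul_zero, zero_add, hu_def]
  -- orbit
  have horbit : ∀ y : V, y ≠ 0 → ∀ z : V, ∃ t ∈ T, t y = z := by
    intro y hy z
    let O : Submodule K V := T.map (LinearMap.applyₗ y)
    have hinv : ∀ si ∈ S, ∀ x ∈ O, si x ∈ O := by
      rintro si hsi x ⟨t, htT, rfl⟩
      exact ⟨si * t, hTmul _ (Submodule.subset_span hsi) _ htT, rfl⟩
    have hO : O = ⊤ := by
      rcases hS O hinv with h | h
      · exfalso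
        have hyO : y ∈ O := ⟨1, Submodule.subset_span h1, rfl⟩
        rw [h] at hyO
        exact hy (by simpa using hyO)
      · exact h
    have hz : z ∈ O := by rw [hO]; trivial
    obtain ⟨t, ht, htz⟩ := hz
    exact ⟨t, ht, htz⟩
  obtain ⟨a₁, ha₁T, ha₁⟩ := horbit u hu0 v
  obtain ⟨a₂, ha₂T, ha₂⟩ := horbit u hu0 w
  -- find b₀ with φ (b₀ v) ≠ 0
  have hb₀ : ∃ b₀ ∈ T, φ (b₀ v) ≠ 0 := by
    by_contra h
    push_neg at h
    let W' : Submodule K V :=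
      { carrier := {x | ∀ t ∈ T, φ (t x) = 0}
        add_mem' := fun {a b} ha hb t ht => by rw [map_add, map_add, ha t ht, hb t ht, add_zero]
        zero_mem' := fun t ht => by rw [map_zero, map_zero]
        smul_mem' := fun c a ha t ht => by rw [map_smul, map_smul, ha t ht, smul_zero] }
    have hW' : W' = ⊥ ∨ W' = ⊤ := by
      refine hS W' ?_
      intro si hsi x hx t htT
      have := hx (t * si) (hTmul _ htT _ (Submodule.subset_span hsi))
      simpa [Module.End.mul_apply] using this
    rcases hW' with hW | hW
    · have hvW : v ∈ W' := h
      rw [hW] at hvW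
      exact hv.2 (by simpa using hvW)
    · have hwW : w ∈ W' := by rw [hW]; trivial
      have := hwW 1 (Submodule.subset_span h1)
      rw [Module.End.one_apply, hφw] at this
      exact one_ne_zero this
  obtain ⟨b₀, hb₀T, hc⟩ := hb₀
  set c := φ (b₀ v) with hc_def
  set p : Module.End K V := a₂ * n with hp_def
  have hp : ∀ x, p x = φ x • w := by
    intro x
    rw [hp_def, Module.End.mul_apply, hn_eq, map_smul, ha₂]
  have hpT : p ∈ T := hTmul _ ha₂T _ hnT
  set bb : Module.End K V := c⁻¹ • (b₀ * (1 - p)) with hbb_def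
  have hbbT : bb ∈ T := Submodule.smul_mem _ _
    (hTmul _ hb₀T _ (Submodule.sub_mem _ (Submodule.subset_span h1) hpT))
  have hbbv : φ (bb v) = 1 := by
    have h1' : (1 - p) v = v := by
      rw [LinearMap.sub_apply, Module.End.one_apply, hp, hφv, zero_smul, sub_zero]
    rw [hbb_def, LinearMap.smul_apply, Module.End.mul_apply, h1', map_smul, smul_eq_mul, ← hc_def,
      inv_mul_cancel₀ hc]
  have hbbw : φ (bb w) = 0 := by
    have h1' : (1 - p) w = 0 := by
      rw [LinearMap.sub_apply, Module.End.one_apply, hp, hφw, one_smul, sub_self]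
    rw [hbb_def, LinearMap.smul_apply, Module.End.mul_apply, h1', map_zero]
    simp
  -- conclusion
  have happly : ∀ (a m : Module.End K V) (x : V), (a * n * m) x = φ (m x) • a u := by
    intro a m x
    rw [Module.End.mul_apply, Module.End.mul_apply, hn_eq, map_smul]
  rw [eq_top_iff]
  rintro e -
  have he : e = ψ (e v) • (a₁ * n * bb) + φ (e v) • (a₂ * n * bb)
      + ψ (e w) • (a₁ * n * 1) + φ (e w) • (a₂ * n * 1) := by
    refine B.ext fun i => ?_
    fin_cases i
    · simp only [Fin.zero_eta, Fin.isValue, hB0, LinearMap.add_apply, LinearMap.smul_apply,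
        happly, ha₁, ha₂, hbbv, hφv, Module.End.one_apply, one_smul, zero_smul, smul_zero,
        add_zero]
      exact (hdecomp (e v)).symm
    · simp only [Fin.mk_one, Fin.isValue, hB1, LinearMap.add_apply, LinearMap.smul_apply,
        happly, ha₁, ha₂, hbbw, hφw, Module.End.one_apply, one_smul, zero_smul, smul_zero,
        zero_add]
      exact (hdecomp (e w)).symm
  rw [he]
  have hmemT : ∀ x ∈ T, ∀ m ∈ T, x * n * m ∈ T := fun x hx m hm =>
    hTmul _ (hTmul _ hx _ hnT) _ hm
  have h1T : (1 : Module.End K V) ∈ T := Submodule.subset_span h1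
  exact Submodule.add_mem _
    (Submodule.add_mem _
      (Submodule.add_mem _ (Submodule.smul_mem _ _ (hmemT _ ha₁T _ hbbT))
        (Submodule.smul_mem _ _ (hmemT _ ha₂T _ hbbT)))
      (Submodule.smul_mem _ _ (hmemT _ ha₁T _ h1T)))
    (Submodule.smul_mem _ _ (hmemT _ ha₂T _ h1T))


open TensorProduct



/-- with `A` a complete Noetherian local commutative ring, `V` free of rank 2
over `A`, and `ρ : G → Aut_A(V)` a representation whose residual representation is
absolutely irreducible, the induced `A`-algebra homomorphism `ρ : A[G] → End_A(V)` is
surjective. -/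
theorem monoidAlgebra_map_to_End_surjective
    {A : Type} [CommRing A] [IsLocalRing A] [IsNoetherianRing A]
    [IsAdicComplete (IsLocalRing.maximalIdeal A) A]
    {V : Type} [AddCommGroup V] [Module A V] [Module.Free A V] [Module.Finite A V]
    (hrank : Module.finrank A V = 2)
    {G : Type} [Group G] (ρ : Representation A G V)
    (hirr : ∀ (K : Type) [Field K] [Algebra A K],
      (∀ a ∈ IsLocalRing.maximalIdeal A, algebraMap A K a = 0) →
      ∀ W : Submodule K (K ⊗[A] V),
        (∀ (g : G), ∀ x ∈ W, LinearMap.baseChange K (ρ g) x ∈ W) → W = ⊥ ∨ W = ⊤) :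
    Function.Surjective ρ.asAlgebraHom := by
  classical
  set k := IsLocalRing.ResidueField A with hk_def
  set K := AlgebraicClosure k with hK_def
  have halg : ∀ a ∈ IsLocalRing.maximalIdeal A, algebraMap A K a = 0 := by
    intro a ha
    rw [IsScalarTower.algebraMap_apply A k K, IsLocalRing.ResidueField.algebraMap_eq,
      (IsLocalRing.residue_eq_zero_iff a).mpr ha, map_zero]
  have hirrK := hirr K halg
  have h2 : Module.finrank K (K ⊗[A] V) = 2 := by
    rw [Module.finrank_baseChange, hrank]
  -- Burnside
  have hspanK : Submodule.span K
      (Set.range fun g => (LinearMap.baseChange K (ρ g) : Module.End K (K ⊗[A] V))) = ⊤ := by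
    refine burnside_two h2 ⟨1, ?_⟩ ?_ ?_
    · show LinearMap.baseChange K (ρ 1) = 1
      rw [map_one]
      exact LinearMap.baseChange_one A V
    · rintro _ ⟨g, rfl⟩ _ ⟨g', rfl⟩
      refine ⟨g * g', ?_⟩
      show LinearMap.baseChange K (ρ (g * g')) = _
      rw [map_mul, LinearMap.baseChange_mul]
    · intro W hW
      exact hirrK W (fun g x hx => hW _ ⟨g, rfl⟩ x hx)
  -- to matrices over K
  set ι := Module.Free.ChooseBasisIndex A V with hι_def
  set b : Basis ι A V := Module.Free.chooseBasis A V with hb_def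
  set bK : Basis ι K (K ⊗[A] V) := Algebra.TensorProduct.basis K b with hbK_def
  have hmatK : Submodule.span K
      (Set.range fun g => (LinearMap.toMatrix b b (ρ g)).map (algebraMap A K)) = ⊤ := by
    have h := congrArg (Submodule.map ((LinearMap.toMatrix bK bK).toLinearMap)) hspanK
    rw [Submodule.map_span, Submodule.map_top, LinearEquiv.range, ← Set.range_comp] at h
    have he : ((LinearMap.toMatrix bK bK).toLinearMap ∘
        fun g => (LinearMap.baseChange K (ρ g) : Module.End K (K ⊗[A] V)))
        = fun g => (LinearMap.toMatrix b b (ρ g)).map (algebraMap A K) := by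
      funext g
      exact LinearMap.toMatrix_baseChange K (ρ g) b b
    rw [he] at h
    exact h
  -- span over the residue field
  have hmatk : Submodule.span k
      (Set.range fun g => (LinearMap.toMatrix b b (ρ g)).map (IsLocalRing.residue A)) = ⊤ := by
    by_contra hne
    obtain ⟨f, hf0, hfmap⟩ := Submodule.exists_dual_map_eq_bot_of_lt_top
      (lt_top_iff_ne_top.mpr hne) inferInstance
    set c : ι → ι → k := fun i j => f (Matrix.single i j 1) with hc_def
    have hf_eq : ∀ Y : Matrix ι ι k, f Y = ∑ i, ∑ j, Y i j * c i j := by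
      intro Y
      conv_lhs => rw [Matrix.matrix_eq_sum_single Y]
      rw [map_sum]
      refine Finset.sum_congr rfl fun i _ => ?_
      rw [map_sum]
      refine Finset.sum_congr rfl fun j _ => ?_
      rw [show Matrix.single i j (Y i j) = Y i j • Matrix.single i j 1 by
        rw [Matrix.smul_single, smul_eq_mul, mul_one], map_smul, smul_eq_mul, hc_def]
    set F : Matrix ι ι K →ₗ[K] K :=
      { toFun := fun Y => ∑ i, ∑ j, Y i j * algebraMap k K (c i j)
        map_add' := by
          intro Y Z
          rw [← Finset.sum_add_distrib]
          refine Finset.sum_congr rfl fun i _ => ?_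
          rw [← Finset.sum_add_distrib]
          exact Finset.sum_congr rfl fun j _ => by rw [Matrix.add_apply, add_mul]
        map_smul' := by
          intro r Y
          simp only [RingHom.id_apply]
          rw [Finset.smul_sum]
          refine Finset.sum_congr rfl fun i _ => ?_
          rw [Finset.smul_sum]
          exact Finset.sum_congr rfl fun j _ => by
            rw [Matrix.smul_apply, smul_eq_mul, smul_eq_mul, mul_assoc] } with hF_def
    have hFvanish : ∀ g, F ((LinearMap.toMatrix b b (ρ g)).map (algebraMap A K)) = 0 := by
      intro g
      have hmem : (LinearMap.toMatrix b b (ρ g)).map (IsLocalRing.residue A) ∈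
          Submodule.span k (Set.range fun g =>
            (LinearMap.toMatrix b b (ρ g)).map (IsLocalRing.residue A)) :=
        Submodule.subset_span ⟨g, rfl⟩
      have hzero : f ((LinearMap.toMatrix b b (ρ g)).map (IsLocalRing.residue A)) = 0 := by
        have hin := Submodule.mem_map_of_mem (f := f) hmem
        rw [hfmap] at hin
        exact (Submodule.mem_bot k).mp hin
      have hcalc : F ((LinearMap.toMatrix b b (ρ g)).map (algebraMap A K))
          = algebraMap k K (f ((LinearMap.toMatrix b b (ρ g)).map (IsLocalRing.residue A))) := by
        rw [hf_eq, map_sum]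
        show (∑ i, ∑ j, ((LinearMap.toMatrix b b (ρ g)).map (algebraMap A K)) i j
            * algebraMap k K (c i j)) = _
        refine Finset.sum_congr rfl fun i _ => ?_
        rw [map_sum]
        refine Finset.sum_congr rfl fun j _ => ?_
        rw [map_mul, Matrix.map_apply, Matrix.map_apply,
          IsScalarTower.algebraMap_apply A k K, IsLocalRing.ResidueField.algebraMap_eq]
      rw [hcalc, hzero, map_zero]
    have hF0 : F = 0 := by
      have hle : Submodule.span K
          (Set.range fun g => (LinearMap.toMatrix b b (ρ g)).map (algebraMap A K))
          ≤ LinearMap.ker F := by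
        rw [Submodule.span_le]
        rintro _ ⟨g, rfl⟩
        exact hFvanish g
      rw [hmatK] at hle
      ext Y
      exact hle Submodule.mem_top
    have hc0 : ∀ i j, c i j = 0 := by
      intro i j
      have hFij := LinearMap.congr_fun hF0 (Matrix.single i j (1 : K))
      have : (∑ i', ∑ j', Matrix.single i j (1 : K) i' j' * algebraMap k K (c i' j'))
          = algebraMap k K (c i j) := by
        rw [Finset.sum_eq_single i, Finset.sum_eq_single j]
        · rw [Matrix.single_apply_same, one_mul]
        · intro j' _ hj'
          rw [Matrix.single_apply_of_ne i j _ i j' (by tauto), zero_mul]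
        · intro h; exact absurd (Finset.mem_univ j) h
        · intro i' _ hi'
          refine Finset.sum_eq_zero fun j' _ => ?_
          rw [Matrix.single_apply_of_ne i j _ i' j' (by tauto), zero_mul]
        · intro h; exact absurd (Finset.mem_univ i) h
      rw [show F (Matrix.single i j (1 : K)) =
          ∑ i', ∑ j', Matrix.single i j (1 : K) i' j' * algebraMap k K (c i' j')
          from rfl, this] at hFij
      have := hFij.trans (by simp : (0 : Matrix ι ι K →ₗ[K] K) (Matrix.single i j 1) = 0)
      exact (algebraMap k K).injective (by rwa [map_zero])
    refine hf0 ?_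
    ext Y
    rw [hf_eq]
    simp [hc0]
  -- Nakayama over A
  set N : Submodule A (Matrix ι ι A) :=
    Submodule.span A (Set.range fun g => LinearMap.toMatrix b b (ρ g)) with hN_def
  set π : Matrix ι ι A →+* Matrix ι ι k := (IsLocalRing.residue A).mapMatrix with hπ_def
  have hπ_apply : ∀ (X : Matrix ι ι A), π X = X.map (IsLocalRing.residue A) := fun X => rfl
  have hπ_smul : ∀ (a : A) (X : Matrix ι ι A),
      π (a • X) = IsLocalRing.residue A a • π X := by
    intro a X
    ext i j
    simp [hπ_def, Matrix.map_apply]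
  have hsup : (⊤ : Submodule A (Matrix ι ι A)) ≤ N ⊔ (IsLocalRing.maximalIdeal A) • ⊤ := by
    intro E _
    have hE : π E ∈ Submodule.span k
        (Set.range fun g => (LinearMap.toMatrix b b (ρ g)).map (IsLocalRing.residue A)) := by
      rw [hmatk]; trivial
    rw [Submodule.mem_span_set] at hE
    obtain ⟨cf, hsupp, hsum⟩ := hE
    choose gg hgg using fun (x : cf.support) => hsupp x.2
    choose lift hlift using fun (x : cf.support) =>
      IsLocalRing.residue_surjective (R := A) (cf x)
    set E' : Matrix ι ι A :=
      ∑ x ∈ cf.support.attach, lift x • LinearMap.toMatrix b b (ρ (gg x)) with hE'_def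
    have hE'N : E' ∈ N := Submodule.sum_mem _ fun x _ =>
      Submodule.smul_mem _ _ (Submodule.subset_span ⟨gg x, rfl⟩)
    have hπE' : π E' = π E := by
      rw [hE'_def, map_sum]
      have : ∀ x ∈ cf.support.attach,
          π (lift x • LinearMap.toMatrix b b (ρ (gg x))) = cf ↑x • (x : Matrix ι ι k) := by
        intro x _
        have hx := hgg x
        beta_reduce at hx
        rw [hπ_smul, hπ_apply, hx, hlift]
      rw [Finset.sum_congr rfl this, Finset.sum_attach cf.support
        (fun m => cf m • m)]
      rw [← hsum]
      rfl
    have hent : ∀ i j, (E - E') i j ∈ IsLocalRing.maximalIdeal A := by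
      intro i j
      have h0 : π (E - E') = 0 := by rw [map_sub, hπE', sub_self]
      have := congrFun (congrFun (congrArg Matrix.of.symm h0) i) j
      have h1 : IsLocalRing.residue A ((E - E') i j) = 0 := this
      exact (IsLocalRing.residue_eq_zero_iff _).mp h1
    have hmem2 : E - E' ∈ (IsLocalRing.maximalIdeal A) • (⊤ : Submodule A (Matrix ι ι A)) := by
      rw [Matrix.matrix_eq_sum_single (E - E')]
      refine Submodule.sum_mem _ fun i _ => Submodule.sum_mem _ fun j _ => ?_
      rw [show Matrix.single i j ((E - E') i j)
          = (E - E') i j • Matrix.single i j 1 by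
        rw [Matrix.smul_single, smul_eq_mul, mul_one]]
      exact Submodule.smul_mem_smul (hent i j) Submodule.mem_top
    have : E = E' + (E - E') := by abel
    rw [this]
    exact Submodule.add_mem_sup hE'N hmem2
  have hNtop : N = ⊤ := by
    rw [eq_top_iff]
    exact Submodule.le_of_le_smul_of_le_jacobson_bot Module.Finite.fg_top
      (IsLocalRing.maximalIdeal_le_jacobson ⊥) hsup
  -- back to End A V
  have hEnd : Submodule.span A (Set.range fun g => (ρ g : Module.End A V)) = ⊤ := by
    have h1 : Submodule.map (LinearMap.toMatrix b b).toLinearMap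
        (Submodule.span A (Set.range fun g => (ρ g : Module.End A V))) = ⊤ := by
      rw [Submodule.map_span, ← Set.range_comp]
      exact hNtop
    have h2 : Submodule.map (LinearMap.toMatrix b b).toLinearMap
        (⊤ : Submodule A (Module.End A V)) = ⊤ := by
      rw [Submodule.map_top, LinearEquiv.range]
    exact Submodule.map_injective_of_injective (LinearMap.toMatrix b b).injective
      (h1.trans h2.symm)
  intro f
  have hf : f ∈ Submodule.span A (Set.range fun g => (ρ g : Module.End A V)) := by
    rw [hEnd]; trivial
  have hle : Submodule.span A (Set.range fun g => (ρ g : Module.End A V))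
      ≤ LinearMap.range ρ.asAlgebraHom.toLinearMap := by
    rw [Submodule.span_le]
    rintro _ ⟨g, rfl⟩
    exact ⟨MonoidAlgebra.single g 1, ρ.asAlgebraHom_single_one g⟩
  obtain ⟨x, hx⟩ := hle hf
  exact ⟨x, hx⟩
end

section
/- For every x ∈ A[G] one has x + x* − (tr x)·1 ∈ J; consequently the ideal J is stable under the anti-involution *, i.e. J* = J. -/
open TensorProduct

theorem matCH {A : Type} [CommRing A] (M : Matrix (Fin 2) (Fin 2) A) :
    M * M - Matrix.trace M • M + Matrix.det M • (1 : Matrix (Fin 2) (Fin 2) A) = 0 := by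
  ext i j
  fin_cases i <;> fin_cases j <;>
    simp [Matrix.mul_apply, Matrix.trace, Matrix.det_fin_two, Fin.sum_univ_two,
      Matrix.one_apply] <;> ring

theorem endCH {A : Type} [CommRing A]
    {V : Type} [AddCommGroup V] [Module A V] [Module.Free A V] [Module.Finite A V]
    (hrank : Module.finrank A V = 2) (f : V →ₗ[A] V) :
    f * f - LinearMap.trace A V f • f + LinearMap.det f • (1 : V →ₗ[A] V) = 0 := by
  have : Nontrivial A := by
    rcases subsingleton_or_nontrivial A with h | h
    · exfalso
      have h1 : Module.rank A V = 1 := rank_subsingleton (R := A) (M := V)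
      have : Module.finrank A V = 1 := by rw [Module.finrank, h1]; simp
      omega
    · exact h
  let b : Module.Basis (Fin 2) A V := Module.finBasisOfFinrankEq A V hrank
  apply (LinearMap.toMatrixAlgEquiv b).injective
  have h1 : ∀ g : V →ₗ[A] V, (LinearMap.toMatrixAlgEquiv b) g = LinearMap.toMatrix b b g :=
    fun g => rfl
  simp only [map_add, map_sub, map_mul, map_smul, map_one, map_zero]
  rw [h1, LinearMap.trace_eq_matrix_trace A b f, ← LinearMap.det_toMatrix b f]
  exact matCH (LinearMap.toMatrix b b f)

/-- The two-sided ideal `J ⊆ A[G]` generated by the elements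
`g² − (tr ρ(g))·g + (det ρ(g))·1`, for `g ∈ G`. -/
noncomputable def blrIdeal {A : Type} [CommRing A]
    {V : Type} [AddCommGroup V] [Module A V] [Module.Free A V] [Module.Finite A V]
    {G : Type} [Group G] (ρ : Representation A G V) :
    TwoSidedIdeal (MonoidAlgebra A G) :=
  TwoSidedIdeal.span
    {x : MonoidAlgebra A G | ∃ g : G,
      x = MonoidAlgebra.of A G g * MonoidAlgebra.of A G g
        - LinearMap.trace A V (ρ g) • MonoidAlgebra.of A G g
        + LinearMap.det (ρ g) • (1 : MonoidAlgebra A G)}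

/-- The `A`-linear anti-involution `* : A[G] → A[G]` determined on group elements by
`g* = (det ρ(g))·g⁻¹`. -/
noncomputable def blrStar {A : Type} [CommRing A]
    {V : Type} [AddCommGroup V] [Module A V] [Module.Free A V] [Module.Finite A V]
    {G : Type} [Group G] (ρ : Representation A G V)
    (x : MonoidAlgebra A G) : MonoidAlgebra A G :=
  Finsupp.sum x.coeff fun g a => (a * LinearMap.det (ρ g)) • MonoidAlgebra.of A G g⁻¹

section aux

variable {A : Type} [CommRing A]
    {V : Type} [AddCommGroup V] [Module A V] [Module.Free A V] [Module.Finite A V]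
    {G : Type} [Group G] (ρ : Representation A G V)

lemma blrStar_add (x y : MonoidAlgebra A G) :
    blrStar ρ (x + y) = blrStar ρ x + blrStar ρ y := by
  unfold blrStar
  rw [MonoidAlgebra.coeff_add]
  apply Finsupp.sum_add_index'
  · intro g; simp
  · intro g a b; rw [add_mul, add_smul]

lemma blrStar_single (g : G) (a : A) :
    blrStar ρ (MonoidAlgebra.single g a)
      = (a * LinearMap.det (ρ g)) • MonoidAlgebra.of A G g⁻¹ := by
  unfold blrStar
  rw [MonoidAlgebra.coeff_single]
  apply Finsupp.sum_single_index
  simp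

lemma det_mul_det_inv (g : G) : LinearMap.det (ρ g) * LinearMap.det (ρ g⁻¹) = 1 := by
  rw [← map_mul, ← map_mul, mul_inv_cancel, map_one, map_one]

lemma blrStar_blrStar (x : MonoidAlgebra A G) : blrStar ρ (blrStar ρ x) = x := by
  induction x using MonoidAlgebra.induction with
  | zero => unfold blrStar; simp
  | single_add g a f _ _ ih =>
    rw [blrStar_add, blrStar_add, ih, blrStar_single]
    congr 1
    have : (a * LinearMap.det (ρ g)) • MonoidAlgebra.of A G g⁻¹
        = MonoidAlgebra.single g⁻¹ (a * LinearMap.det (ρ g)) := by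
      rw [MonoidAlgebra.of_apply, MonoidAlgebra.smul_single', mul_one]
    rw [this, blrStar_single, inv_inv, mul_assoc, det_mul_det_inv, mul_one,
      MonoidAlgebra.of_apply, MonoidAlgebra.smul_single', mul_one]

lemma gen_mem (g : G) :
    MonoidAlgebra.of A G g * MonoidAlgebra.of A G g
      - LinearMap.trace A V (ρ g) • MonoidAlgebra.of A G g
      + LinearMap.det (ρ g) • (1 : MonoidAlgebra A G) ∈ blrIdeal ρ :=
  TwoSidedIdeal.subset_span ⟨g, rfl⟩

lemma key_mem (g : G) :
    MonoidAlgebra.of A G g + LinearMap.det (ρ g) • MonoidAlgebra.of A G g⁻¹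
      - LinearMap.trace A V (ρ g) • (1 : MonoidAlgebra A G) ∈ blrIdeal ρ := by
  have h : MonoidAlgebra.of A G g + LinearMap.det (ρ g) • MonoidAlgebra.of A G g⁻¹
      - LinearMap.trace A V (ρ g) • (1 : MonoidAlgebra A G)
      = MonoidAlgebra.of A G g⁻¹ *
        (MonoidAlgebra.of A G g * MonoidAlgebra.of A G g
          - LinearMap.trace A V (ρ g) • MonoidAlgebra.of A G g
          + LinearMap.det (ρ g) • (1 : MonoidAlgebra A G)) := by
    simp only [mul_add, mul_sub, ← mul_assoc, mul_smul_comm, ← map_mul, inv_mul_cancel,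
      map_one, one_mul, mul_one]
    abel
  rw [h]
  exact TwoSidedIdeal.mul_mem_left _ _ _ (gen_mem ρ g)

lemma smul_mem_blr (a : A) {x : MonoidAlgebra A G} (hx : x ∈ blrIdeal ρ) :
    a • x ∈ blrIdeal ρ := by
  rw [Algebra.smul_def]
  exact TwoSidedIdeal.mul_mem_left _ _ _ hx

end aux

/-- for every `x ∈ A[G]` one has `x + x* − (tr x)·1 ∈ J`; consequently the
two-sided ideal `J` is stable under the anti-involution `*`, i.e. `J* = J`. -/
theorem star_relation_and_ideal_stable
    {A : Type} [CommRing A] [IsLocalRing A] [IsNoetherianRing A]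
    [IsAdicComplete (IsLocalRing.maximalIdeal A) A]
    {V : Type} [AddCommGroup V] [Module A V] [Module.Free A V] [Module.Finite A V]
    (hrank : Module.finrank A V = 2)
    {G : Type} [Group G] (ρ : Representation A G V)
    (hirr : ∀ (K : Type) [Field K] [Algebra A K],
      (∀ a ∈ IsLocalRing.maximalIdeal A, algebraMap A K a = 0) →
      ∀ W : Submodule K (K ⊗[A] V),
        (∀ (g : G), ∀ x ∈ W, LinearMap.baseChange K (ρ g) x ∈ W) → W = ⊥ ∨ W = ⊤) :
    (∀ x : MonoidAlgebra A G,
        x + blrStar ρ x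
          - LinearMap.trace A V (ρ.asAlgebraHom x) • (1 : MonoidAlgebra A G) ∈ blrIdeal ρ)
    ∧ ∀ x : MonoidAlgebra A G, x ∈ blrIdeal ρ ↔ blrStar ρ x ∈ blrIdeal ρ := by
  have part1 : ∀ x : MonoidAlgebra A G,
      x + blrStar ρ x
        - LinearMap.trace A V (ρ.asAlgebraHom x) • (1 : MonoidAlgebra A G) ∈ blrIdeal ρ := by
    intro x
    induction x using MonoidAlgebra.induction with
    | zero =>
      have : blrStar ρ (0 : MonoidAlgebra A G) = 0 := by unfold blrStar; simp
      rw [this, map_zero, map_zero, zero_smul, add_zero, sub_zero]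
      exact TwoSidedIdeal.zero_mem _
    | single_add g a f _ _ ih =>
      have hadd : ∀ s t : MonoidAlgebra A G,
          (s + blrStar ρ s
            - LinearMap.trace A V (ρ.asAlgebraHom s) • (1 : MonoidAlgebra A G) ∈ blrIdeal ρ) →
          (t + blrStar ρ t
            - LinearMap.trace A V (ρ.asAlgebraHom t) • (1 : MonoidAlgebra A G) ∈ blrIdeal ρ) →
          (s + t) + blrStar ρ (s + t)
            - LinearMap.trace A V (ρ.asAlgebraHom (s + t))
              • (1 : MonoidAlgebra A G) ∈ blrIdeal ρ := by
        intro s t hs ht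
        have h : (s + t) + blrStar ρ (s + t)
            - LinearMap.trace A V (ρ.asAlgebraHom (s + t)) • (1 : MonoidAlgebra A G)
            = (s + blrStar ρ s
                - LinearMap.trace A V (ρ.asAlgebraHom s) • (1 : MonoidAlgebra A G))
              + (t + blrStar ρ t
                - LinearMap.trace A V (ρ.asAlgebraHom t) • (1 : MonoidAlgebra A G)) := by
          rw [blrStar_add, map_add, map_add, add_smul]
          abel
        rw [h]
        exact TwoSidedIdeal.add_mem _ hs ht
      have hsingle : MonoidAlgebra.single g a + blrStar ρ (MonoidAlgebra.single g a)
          - LinearMap.trace A V (ρ.asAlgebraHom (MonoidAlgebra.single g a))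
            • (1 : MonoidAlgebra A G) ∈ blrIdeal ρ := by
        have h1 : ρ.asAlgebraHom (MonoidAlgebra.single g a) = a • ρ g :=
          Representation.asAlgebraHom_single ρ g a
        have h2 : LinearMap.trace A V (a • ρ g) = a * LinearMap.trace A V (ρ g) := by
          rw [map_smul, smul_eq_mul]
        have h3 : MonoidAlgebra.single g a = a • MonoidAlgebra.of A G g := by
          rw [MonoidAlgebra.of_apply, MonoidAlgebra.smul_single', mul_one]
        rw [h1, h2, blrStar_single, h3, mul_comm a (LinearMap.det (ρ g)), mul_smul, mul_smul]
        have h4 : a • MonoidAlgebra.of A G g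
              + LinearMap.det (ρ g) • a • MonoidAlgebra.of A G g⁻¹
              - a • LinearMap.trace A V (ρ g) • (1 : MonoidAlgebra A G)
            = a • (MonoidAlgebra.of A G g + LinearMap.det (ρ g) • MonoidAlgebra.of A G g⁻¹
              - LinearMap.trace A V (ρ g) • (1 : MonoidAlgebra A G)) := by
          rw [smul_sub, smul_add, smul_comm a (LinearMap.det (ρ g))]
        rw [h4]
        exact smul_mem_blr ρ a (key_mem ρ g)
      exact hadd _ f hsingle ih
  -- the representation kills the ideal
  have hker : ∀ x ∈ blrIdeal ρ, ρ.asAlgebraHom x = 0 := by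
    intro x hx
    have : x ∈ TwoSidedIdeal.ker ρ.asAlgebraHom := by
      refine TwoSidedIdeal.mem_span_iff.mp hx _ ?_
      rintro y ⟨g, rfl⟩
      rw [SetLike.mem_coe, TwoSidedIdeal.mem_ker]
      simp only [map_add, map_sub, map_mul, map_smul, map_one,
        Representation.asAlgebraHom_of]
      exact endCH hrank (ρ g)
    rwa [TwoSidedIdeal.mem_ker] at this
  have fwd : ∀ x ∈ blrIdeal ρ, blrStar ρ x ∈ blrIdeal ρ := by
    intro x hx
    have htr : LinearMap.trace A V (ρ.asAlgebraHom x) = 0 := by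
      rw [hker x hx]; simp
    have h1 := part1 x
    rw [htr, zero_smul, sub_zero] at h1
    have h2 : blrStar ρ x = (x + blrStar ρ x) - x := by abel
    rw [h2]
    exact TwoSidedIdeal.sub_mem _ h1 hx
  exact ⟨part1, fun x => ⟨fwd x, fun h => by
    have := fwd _ h
    rwa [blrStar_blrStar] at this⟩⟩
end

section
/- Suppose x ∈ A[G] satisfies ρ(x) = 0. Then for every y ∈ A[G] one has y·x − x·y* ∈ J, and for all y, z ∈ A[G] one has (yz − zy)·x ∈ J. Consequently the annihilator { r ∈ R : r·x̄ = 0 } of the image x̄ of x in R = A[G]/J is a two-sided ideal of R containing the image of every commutator yz − zy. -/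
open TensorProduct

set_option linter.unusedSectionVars false

section BLRAux

variable {A : Type} [CommRing A]
    {V : Type} [AddCommGroup V] [Module A V] [Module.Free A V] [Module.Finite A V]
    {G : Type} [Group G] (ρ : Representation A G V)

/-- The trace form `A[G] → A`, `y ↦ tr ρ(y)`, as an `A`-linear map. -/
noncomputable def blrT : MonoidAlgebra A G →ₗ[A] A :=
  (LinearMap.trace A V) ∘ₗ ρ.asAlgebraHom.toLinearMap

lemma blrT_of (g : G) : blrT ρ (MonoidAlgebra.of A G g) = LinearMap.trace A V (ρ g) := by
  simp [blrT, Representation.asAlgebraHom_of]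

local notation "J" => blrIdeal ρ
local notation "oo" => MonoidAlgebra.of A G
local notation "tt" g => LinearMap.trace A V (ρ g)
local notation "dd" g => LinearMap.det (ρ g)

lemma blr_smul_mem (a : A) {u : MonoidAlgebra A G} (hu : u ∈ J) : a • u ∈ J := by
  rw [Algebra.smul_def]
  exact (blrIdeal ρ).mul_mem_left _ _ hu

lemma blr_gen_mem (g : G) :
    oo g * oo g - (tt g) • oo g + (dd g) • 1 ∈ J :=
  TwoSidedIdeal.subset_span ⟨g, rfl⟩

/-- `g + det(ρ g)·g⁻¹ − tr(ρ g)·1 = g⁻¹·(g² − tr(ρ g)·g + det(ρ g)·1) ∈ J`. -/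
lemma blr_ag_mem (g : G) :
    oo g + (dd g) • oo g⁻¹ - (tt g) • (1 : MonoidAlgebra A G) ∈ J := by
  have h := (blrIdeal ρ).mul_mem_left (oo g⁻¹) _ (blr_gen_mem ρ g)
  convert h using 1
  have h1 : oo g⁻¹ * oo g = 1 := by rw [← map_mul, inv_mul_cancel, map_one]
  rw [mul_add, mul_sub, mul_smul_comm, mul_smul_comm, ← mul_assoc, h1, one_mul, mul_one]
  abel

/-- The fully polarized Cayley–Hamilton relation for a pair of group elements. -/
lemma blr_c_mem (g h : G) :
    oo g * oo h + oo h * oo g - (tt g) • oo h - (tt h) • oo g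
      + (((tt g) * (tt h)) - blrT ρ (oo g * oo h)) • (1 : MonoidAlgebra A G) ∈ J := by
  have hgh' := blr_ag_mem ρ (g * h)
  rw [← blrT_of ρ (g * h), mul_inv_rev] at hgh'
  simp only [map_mul] at hgh'
  have h2 := (blrIdeal ρ).sub_mem
    ((blrIdeal ρ).sub_mem
      ((blrIdeal ρ).sub_mem hgh'
        ((blrIdeal ρ).mul_mem_left (oo h + (dd h) • oo h⁻¹ - (tt h) • 1) _ (blr_ag_mem ρ g)))
      ((blrIdeal ρ).mul_mem_right _ ((tt g) • 1 - oo g) (blr_ag_mem ρ h)))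
    ((blrIdeal ρ).mul_mem_left ((tt h) • 1 - oo h) _ (blr_ag_mem ρ g))
  convert h2 using 1
  simp only [mul_add, add_mul, mul_sub, sub_mul, smul_mul_assoc, mul_smul_comm, smul_smul,
    mul_one, one_mul, mul_assoc]
  module

/-- The polarized Cayley–Hamilton relation, for a group element and an arbitrary element. -/
lemma blr_key_all (g : G) (w : MonoidAlgebra A G) :
    oo g * w + w * oo g - (tt g) • w - blrT ρ w • oo g
      - blrT ρ (oo g * w) • (1 : MonoidAlgebra A G)
      + ((tt g) * blrT ρ w) • (1 : MonoidAlgebra A G) ∈ J := by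
  induction w using MonoidAlgebra.induction_linear with
  | zero =>
    simp only [mul_zero, zero_mul, smul_zero, map_zero, zero_smul, mul_zero,
      add_zero, sub_zero, zero_add]
    exact (blrIdeal ρ).zero_mem
  | add f f' hf hf' =>
    convert (blrIdeal ρ).add_mem hf hf' using 1
    simp only [mul_add, add_mul, map_add, add_smul, smul_add, mul_add]
    abel
  | single h a =>
    have e : (MonoidAlgebra.single h a : MonoidAlgebra A G) = a • oo h := by
      rw [MonoidAlgebra.of_apply, MonoidAlgebra.smul_single, smul_eq_mul, mul_one]
    have hc := blr_smul_mem ρ a (blr_c_mem ρ g h)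
    convert hc using 1
    rw [e]
    simp only [map_smul, smul_eq_mul, mul_smul_comm, smul_mul_assoc, smul_smul, smul_sub,
      smul_add, blrT_of, sub_smul, add_smul, mul_assoc]
    module

/-- If `ρ(w) = 0` then `y·w + w·y − tr(ρ y)·w ∈ J` for every `y`. -/
lemma blr_key_ker {w : MonoidAlgebra A G} (hw : ρ.asAlgebraHom w = 0) (y : MonoidAlgebra A G) :
    y * w + w * y - blrT ρ y • w ∈ J := by
  have h0 : blrT ρ w = 0 := by simp [blrT, hw]
  have hker : ∀ g : G, oo g * w + w * oo g - (tt g) • w ∈ J := by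
    intro g
    have h1 : blrT ρ (oo g * w) = 0 := by simp [blrT, map_mul, hw]
    have h2 := blr_key_all ρ g w
    rw [h0, h1] at h2
    simpa using h2
  induction y using MonoidAlgebra.induction_linear with
  | zero =>
    simp only [zero_mul, mul_zero, map_zero, zero_smul, add_zero, sub_zero, zero_add]
    exact (blrIdeal ρ).zero_mem
  | add f f' hf hf' =>
    convert (blrIdeal ρ).add_mem hf hf' using 1
    simp only [mul_add, add_mul, map_add, add_smul, smul_add]
    abel
  | single g a =>
    have e : (MonoidAlgebra.single g a : MonoidAlgebra A G) = a • oo g := by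
      rw [MonoidAlgebra.of_apply, MonoidAlgebra.smul_single, smul_eq_mul, mul_one]
    have hc := blr_smul_mem ρ a (hker g)
    convert hc using 1
    rw [e]
    simp only [map_smul, smul_eq_mul, mul_smul_comm, smul_mul_assoc, smul_smul, smul_sub,
      smul_add, blrT_of]

/-- `y + y* − tr(ρ y)·1 ∈ J` for every `y`. -/
lemma blr_star_rel (y : MonoidAlgebra A G) :
    y + blrStar ρ y - blrT ρ y • (1 : MonoidAlgebra A G) ∈ J := by
  induction y using MonoidAlgebra.induction_linear with
  | zero =>
    have : blrStar ρ (0 : MonoidAlgebra A G) = 0 := Finsupp.sum_zero_index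
    rw [this]
    simp only [map_zero, zero_smul, add_zero, sub_zero]
    exact (blrIdeal ρ).zero_mem
  | add f f' hf hf' =>
    have : blrStar ρ (f + f') = blrStar ρ f + blrStar ρ f' :=
      Finsupp.sum_add_index' (fun g => by simp) (fun g a b => by rw [add_mul, add_smul])
    rw [this]
    convert (blrIdeal ρ).add_mem hf hf' using 1
    simp only [map_add, add_smul]
    abel
  | single g a =>
    have hst : blrStar ρ (MonoidAlgebra.single g a) = (a * (dd g)) • oo g⁻¹ :=
      Finsupp.sum_single_index (by rw [zero_mul, zero_smul])
    have e : (MonoidAlgebra.single g a : MonoidAlgebra A G) = a • oo g := by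
      rw [MonoidAlgebra.of_apply, MonoidAlgebra.smul_single, smul_eq_mul, mul_one]
    have hc := blr_smul_mem ρ a (blr_ag_mem ρ g)
    convert hc using 1
    rw [hst, e, blrT]
    simp only [LinearMap.coe_comp, Function.comp_apply, AlgHom.toLinearMap_apply, map_smul,
      Representation.asAlgebraHom_of, smul_eq_mul, smul_sub, smul_add, smul_smul]

end BLRAux

/-- suppose `x ∈ A[G]` satisfies `ρ(x) = 0`.  Then `y·x − x·y* ∈ J` for all
`y`, and `(yz − zy)·x ∈ J` for all `y, z`; consequently, the annihilator
`{ r ∈ R : r·x̄ = 0 }` of the image `x̄` of `x` in `R = A[G]/J` — described here as the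
preimage `Ann = { y : y·x ∈ J }` — is a two-sided ideal of `R` containing the image of
every commutator `yz − zy`. -/
theorem annihilator_of_kernel_element_is_twoSided_ideal_containing_commutators
    {A : Type} [CommRing A] [IsLocalRing A] [IsNoetherianRing A]
    [IsAdicComplete (IsLocalRing.maximalIdeal A) A]
    {V : Type} [AddCommGroup V] [Module A V] [Module.Free A V] [Module.Finite A V]
    (hrank : Module.finrank A V = 2)
    {G : Type} [Group G] (ρ : Representation A G V)
    (hirr : ∀ (K : Type) [Field K] [Algebra A K],
      (∀ a ∈ IsLocalRing.maximalIdeal A, algebraMap A K a = 0) →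
      ∀ W : Submodule K (K ⊗[A] V),
        (∀ (g : G), ∀ x ∈ W, LinearMap.baseChange K (ρ g) x ∈ W) → W = ⊥ ∨ W = ⊤)
    (x : MonoidAlgebra A G) (hx : ρ.asAlgebraHom x = 0) :
    (∀ y : MonoidAlgebra A G, y * x - x * blrStar ρ y ∈ blrIdeal ρ)
    ∧ (∀ y z : MonoidAlgebra A G, (y * z - z * y) * x ∈ blrIdeal ρ)
    -- the annihilator `Ann = { y | y·x ∈ J }` descends to a two-sided ideal of `R = A[G]/J`
    -- containing the image of every commutator:
    ∧ (∀ y z : MonoidAlgebra A G, y * x ∈ blrIdeal ρ → z * x ∈ blrIdeal ρ →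
        (y + z) * x ∈ blrIdeal ρ)
    ∧ (∀ y : MonoidAlgebra A G, y * x ∈ blrIdeal ρ → (-y) * x ∈ blrIdeal ρ)
    ∧ (∀ r y : MonoidAlgebra A G, y * x ∈ blrIdeal ρ →
        (r * y) * x ∈ blrIdeal ρ ∧ (y * r) * x ∈ blrIdeal ρ)
    ∧ (∀ j : MonoidAlgebra A G, j ∈ blrIdeal ρ → j * x ∈ blrIdeal ρ) := by
  refine ⟨?_, ?_, ?_, ?_, ?_, ?_⟩
  · -- `y·x − x·y* ∈ J`
    intro y
    have h1 := blr_key_ker ρ hx y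
    have h2 := (blrIdeal ρ).mul_mem_left x _ (blr_star_rel ρ y)
    have h3 := (blrIdeal ρ).sub_mem h1 h2
    convert h3 using 1
    simp only [mul_add, mul_sub, mul_smul_comm, mul_one]
    abel
  · -- `(yz − zy)·x ∈ J`
    intro y z
    have hzx : ρ.asAlgebraHom (z * x) = 0 := by rw [map_mul, hx, mul_zero]
    have h1 := blr_key_ker ρ hzx y
    have h3 := (blrIdeal ρ).mul_mem_left z _ (blr_key_ker ρ hx y)
    have h4 := (blrIdeal ρ).sub_mem h1 h3
    convert h4 using 1
    simp only [mul_add, mul_sub, sub_mul, mul_smul_comm, mul_assoc]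
    abel
  · -- closed under addition
    intro y z hy hz
    rw [add_mul]
    exact (blrIdeal ρ).add_mem hy hz
  · -- closed under negation
    intro y hy
    rw [neg_mul]
    exact (blrIdeal ρ).neg_mem hy
  · -- closed under left and right multiplication
    intro r y hy
    constructor
    · rw [mul_assoc]
      exact (blrIdeal ρ).mul_mem_left _ _ hy
    · have h2 := (blrIdeal ρ).mul_mem_left y _ (blr_key_ker ρ hx r)
      have h3 := (blrIdeal ρ).mul_mem_right _ r hy
      have h4 := blr_smul_mem ρ (blrT ρ r) hy
      have h5 := (blrIdeal ρ).add_mem ((blrIdeal ρ).sub_mem h2 h3) h4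
      convert h5 using 1
      simp only [mul_add, mul_sub, mul_smul_comm, mul_assoc]
      abel
  · -- `J·x ⊆ J`
    intro j hj
    exact (blrIdeal ρ).mul_mem_right _ _ hj
end

section
/- Every two-sided ideal I of End_A(V) which contains all commutators e∘f − f∘e, for e, f ∈ End_A(V), is equal to End_A(V); in particular id_V ∈ I. -/
/-- Let `A` be a local commutative ring and `V` a free `A`-module of rank 2.
Every two-sided ideal `I` of `End_A(V)` which contains all commutators `e ∘ f - f ∘ e`
is equal to `End_A(V)`; in particular `id_V ∈ I`. -/
theorem every_twoSidedIdeal_containing_commutators_eq_top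
    {A : Type} [CommRing A] [IsLocalRing A]
    {V : Type} [AddCommGroup V] [Module A V] [Module.Free A V] [Module.Finite A V]
    (hrank : Module.finrank A V = 2)
    (I : TwoSidedIdeal (Module.End A V))
    (hI : ∀ e f : Module.End A V, e * f - f * e ∈ I) :
    I = ⊤ ∧ (1 : Module.End A V) ∈ I := by
  have b : Module.Basis (Fin 2) A V := (Module.finBasis A V).reindex (finCongr hrank)
  set E : Fin 2 → Fin 2 → Module.End A V :=
    fun i j => b.constr A fun k => if k = j then b i else 0 with hE
  have hmul : ∀ i j k l, E i j * E k l = if j = k then E i l else 0 := by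
    intro i j k l
    apply b.ext
    intro m
    simp only [hE, Module.End.mul_apply, Module.Basis.constr_basis]
    by_cases hjk : j = k
    · subst hjk; by_cases hmk : m = l <;> simp [hmk]
    · by_cases hmk : m = l <;> simp [hmk, hjk, Ne.symm hjk]
  have h01 : E 0 1 ∈ I := by
    have := hI (E 0 0) (E 0 1)
    rwa [hmul, hmul, if_pos rfl, if_neg (by decide), sub_zero] at this
  have h00 : E 0 0 ∈ I := by
    have := I.mul_mem_right _ (E 1 0) h01
    rwa [hmul, if_pos rfl] at this
  have h11 : E 1 1 ∈ I := by
    have := I.mul_mem_left (E 1 0) _ h01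
    rwa [hmul, if_pos rfl] at this
  have hone : (1 : Module.End A V) = E 0 0 + E 1 1 := by
    apply b.ext
    intro m
    fin_cases m <;> simp [hE, Module.Basis.constr_basis]
  have h1 : (1 : Module.End A V) ∈ I := by
    rw [hone]; exact I.add_mem h00 h11
  exact ⟨I.eq_top h1, h1⟩
end

section
/- Let β : Γ → kˣ be a homomorphism. Then k'(α) is isomorphic, as an 𝔽_p[Γ]-module, to an 𝔽_p[Γ]-submodule of k(β) if and only if there exists a field automorphism F of k such that β(γ) = F(α(γ)) for all γ ∈ Γ. -/
lemma extend_subfield_hom {p : ℕ} (hp : p.Prime) {k : Type} [Field k] [Fintype k] [CharP k p]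
    (K : Subfield k) (g : K →+* k) : ∃ F : k ≃+* k, ∀ x : K, F (x : k) = g x := by
  haveI := Fact.mk hp
  haveI : CharP K p := K.subtype.charP Subtype.val_injective p
  letI : Algebra (ZMod p) k := ZMod.algebra k p
  letI : Algebra (ZMod p) K := ZMod.algebra K p
  letI : Algebra K k := K.subtype.toAlgebra
  haveI : @IsScalarTower (ZMod p) K k Algebra.toSMul Algebra.toSMul Algebra.toSMul :=
    IsScalarTower.of_algebraMap_eq' (RingHom.ext_zmod _ _)
  let gA : K →ₐ[ZMod p] k :=
    { toRingHom := g
      commutes' := fun r => RingHom.congr_fun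
        (RingHom.ext_zmod (g.comp (algebraMap (ZMod p) K)) (algebraMap (ZMod p) k)) r }
  let ψ : k →ₐ[ZMod p] k := gA.liftNormal k
  refine ⟨(AlgEquiv.ofBijective ψ (AlgHom.normal_bijective (ZMod p) k k ψ)).toRingEquiv,
    fun x => ?_⟩
  have h := gA.liftNormal_commutes k x
  simp [RingHom.algebraMap_toAlgebra] at h ⊢
  exact h

/-- let `k` be a finite field of characteristic `p`, `Γ` a group,
`α, β : Γ → kˣ` homomorphisms, and let `k'` be the subfield of `k` generated by the
values of `α`.  Then `k'(α)` is isomorphic, as an `𝔽_p[Γ]`-module, to an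
`𝔽_p[Γ]`-submodule of `k(β)` (i.e. there is an injective additive — equivalently
`𝔽_p`-linear — map `k' → k` intertwining multiplication by `α(γ)` with multiplication by
`β(γ)`) if and only if there is a field automorphism `F` of `k` with `β = F ∘ α`. -/
theorem character_module_embeds_iff_twist_by_automorphism
    {p : ℕ} (hp : p.Prime) {k : Type} [Field k] [Fintype k] [CharP k p]
    {Γ : Type} [Group Γ] (α β : Γ →* kˣ) :
    (∃ f : (Subfield.closure (Set.range fun γ => ((α γ : kˣ) : k))) →+ k,
        Function.Injective f ∧
        ∀ (γ : Γ) (x : Subfield.closure (Set.range fun γ => ((α γ : kˣ) : k))),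
          f ⟨((α γ : kˣ) : k) * (x : k),
              mul_mem (Subfield.subset_closure ⟨γ, rfl⟩) x.2⟩
            = ((β γ : kˣ) : k) * f x)
    ↔ ∃ F : k ≃+* k, ∀ γ : Γ, ((β γ : kˣ) : k) = F ((α γ : kˣ) : k) := by
  set K := Subfield.closure (Set.range fun γ => ((α γ : kˣ) : k)) with hKdef
  constructor
  · rintro ⟨f, hinj, hf⟩
    have h1 : f 1 ≠ 0 := by
      intro h
      exact one_ne_zero (hinj (h.trans (map_zero f).symm))
    -- restate hf in terms of multiplication in K
    have hfa : ∀ (γ : Γ) (x : K),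
        f ((⟨((α γ : kˣ) : k), Subfield.subset_closure ⟨γ, rfl⟩⟩ : K) * x)
          = ((β γ : kˣ) : k) * f x := by
      intro γ x
      exact hf γ x
    -- the key multiplicativity statement
    have key : ∀ a y : K, f 1 * f (a * y) = f a * f y := by
      intro a
      have := Subfield.closure_induction
        (s := Set.range fun γ => ((α γ : kˣ) : k))
        (p := fun x hx => ∀ y : K, f 1 * f ((⟨x, hx⟩ : K) * y) = f ⟨x, hx⟩ * f y)
        (by
          rintro x ⟨γ, rfl⟩ y
          rw [hfa γ y]
          have h1' : f (⟨((α γ : kˣ) : k), Subfield.subset_closure ⟨γ, rfl⟩⟩ : K)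
              = ((β γ : kˣ) : k) * f 1 := by
            have := hfa γ 1
            rwa [mul_one] at this
          rw [h1']; ring)
        (by
          intro y
          have e : (⟨1, one_mem _⟩ : K) = 1 := rfl
          rw [e, one_mul])
        (by
          intro x x' hx hx' px px' y
          have e : (⟨x + x', add_mem hx hx'⟩ : K) = ⟨x, hx⟩ + ⟨x', hx'⟩ := rfl
          rw [e, add_mul, map_add, map_add, mul_add, px y, px' y, add_mul])
        (by
          intro x hx px y
          have e : (⟨-x, neg_mem hx⟩ : K) = -⟨x, hx⟩ := rfl
          rw [e, neg_mul, map_neg, map_neg, mul_neg, px y, neg_mul])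
        (by
          intro x hx px y
          have e : (⟨x⁻¹, inv_mem hx⟩ : K) = (⟨x, hx⟩ : K)⁻¹ := rfl
          rw [e]
          set a : K := ⟨x, hx⟩ with ha
          by_cases hx0 : a = 0
          · simp [hx0]
          · have hfa0 : f a ≠ 0 := fun h => hx0 (hinj (h.trans (map_zero f).symm))
            have h1' := px (a⁻¹ * y)
            rw [mul_inv_cancel_left₀ hx0] at h1'
            have h2 := px a⁻¹
            rw [mul_inv_cancel₀ hx0] at h2
            apply mul_left_cancel₀ hfa0
            calc f a * (f 1 * f (a⁻¹ * y)) = f 1 * (f a * f (a⁻¹ * y)) := by ring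
              _ = f 1 * (f 1 * f y) := by rw [← h1']
              _ = (f 1 * f 1) * f y := by ring
              _ = (f a * f a⁻¹) * f y := by rw [h2]
              _ = f a * (f a⁻¹ * f y) := by ring)
        (by
          intro x x' hx hx' px px' y
          have e : (⟨x * x', mul_mem hx hx'⟩ : K) = ⟨x, hx⟩ * ⟨x', hx'⟩ := rfl
          rw [e]
          set a : K := ⟨x, hx⟩
          set b : K := ⟨x', hx'⟩
          apply mul_left_cancel₀ h1
          rw [mul_assoc a b y]
          linear_combination f 1 * px (b * y) + f a * px' y - f y * px b)
        a.2
      intro y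
      have := this y
      simpa using this
    -- build the ring homomorphism g : K →+* k
    let g : K →+* k :=
      { toFun := fun a => (f 1)⁻¹ * f a
        map_one' := inv_mul_cancel₀ h1
        map_mul' := fun a b => by
          have h := key a b
          field_simp
          linear_combination h
        map_zero' := by simp
        map_add' := fun a b => by rw [map_add, mul_add] }
    obtain ⟨F, hF⟩ := extend_subfield_hom hp K g
    refine ⟨F, fun γ => ?_⟩
    have hmem : ((α γ : kˣ) : k) ∈ K := Subfield.subset_closure ⟨γ, rfl⟩
    have hfg : f (⟨((α γ : kˣ) : k), hmem⟩ : K) = ((β γ : kˣ) : k) * f 1 := by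
      have := hfa γ 1
      rwa [mul_one] at this
    have := hF ⟨((α γ : kˣ) : k), hmem⟩
    rw [this]
    show ((β γ : kˣ) : k) = (f 1)⁻¹ * f (⟨((α γ : kˣ) : k), hmem⟩ : K)
    rw [hfg]
    field_simp
  · rintro ⟨F, hF⟩
    refine ⟨AddMonoidHom.mk' (fun x => F (x : k)) (fun a b => by
        push_cast
        exact map_add F _ _), ?_, ?_⟩
    · intro a b hab
      exact Subtype.ext (F.injective hab)
    · intro γ x
      show F (((α γ : kˣ) : k) * (x : k)) = ((β γ : kˣ) : k) * F (x : k)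
      rw [map_mul, hF γ]
end

section
/- The first group cohomology H¹(Gal(F(ζ_{p^N})/F), k(δ·ε̄)) vanishes. -/
/-- let `F` be a totally real number field and `p` an odd prime with
`4 ∣ [F(ζ_p) : F]`, let `K` be the unique quadratic subfield of `F(ζ_p)/F`, let `N ≥ 1`
and let `L = F(ζ_{p^N})`.  Let `k` be a finite field of characteristic `p`, let
`ε̄ : Gal(L/F) → kˣ` be the mod-`p` cyclotomic character (describing the action on the
`p`-th roots of unity) and `δ : Gal(L/F) → kˣ` the inflation of the unique order-2
character of `Gal(K/F)`.  Then `H¹(Gal(L/F), k(δ·ε̄)) = 0`: every 1-cocycle of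
`Gal(L/F)` valued in `k` with the `δ·ε̄`-twisted action is a coboundary. -/
theorem h1_of_quadratic_twist_of_cyclotomic_character_vanishes
    {F L : Type} [Field F] [NumberField F]
    (htrF : ∀ φ : F →+* ℂ, ∀ x : F, (φ x).im = 0)
    (p N : ℕ) (hp : p.Prime) (hp2 : p ≠ 2) (hN : 1 ≤ N)
    [Field L] [Algebra F L]
    (ξ : L) (hξ : IsPrimitiveRoot ξ (p ^ N))
    (hL : IntermediateField.adjoin F {ξ} = ⊤)
    (ζ : L) (hζ : IsPrimitiveRoot ζ p)
    (h4 : 4 ∣ Module.finrank F (IntermediateField.adjoin F {ζ}))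
    (K : IntermediateField F L) (hK2 : Module.finrank F K = 2)
    (hKζ : K ≤ IntermediateField.adjoin F {ζ})
    {k : Type} [Field k] [Fintype k] [CharP k p]
    (ε : (L ≃ₐ[F] L) →* kˣ)
    (hε : ∀ (g : L ≃ₐ[F] L) (m : ℕ), g ζ = ζ ^ m → ((ε g : kˣ) : k) = (m : k))
    (δ : (L ≃ₐ[F] L) →* kˣ)
    (hδ1 : ∀ g : L ≃ₐ[F] L, (((δ g : kˣ) : k) = 1 ↔ ∀ x : L, x ∈ K → g x = x))
    (hδ2 : ∀ g : L ≃ₐ[F] L, ((δ g : kˣ) : k) = 1 ∨ ((δ g : kˣ) : k) = -1) :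
    ∀ f : (L ≃ₐ[F] L) → k,
      (∀ g h : L ≃ₐ[F] L,
        f (g * h) = f g + ((δ g : kˣ) : k) * ((ε g : kˣ) : k) * f h) →
      ∃ x : k, ∀ g : L ≃ₐ[F] L,
        f g = ((δ g : kˣ) : k) * ((ε g : kˣ) : k) * x - x := by

  intro f hf
  haveI : CharZero L := charZero_of_injective_algebraMap (algebraMap F L).injective
  haveI := Fact.mk hp
  haveI : NeZero p := ⟨hp.ne_zero⟩
  have hpN : 0 < p ^ N := pow_pos hp.pos N
  haveI : NeZero (p ^ N) := ⟨hpN.ne'⟩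
  set nN : ℕ+ := ⟨p ^ N, hpN⟩ with hnN
  set n1 : ℕ+ := ⟨p, hp.pos⟩ with hn1
  have hξ' : IsPrimitiveRoot ξ ((nN : ℕ+) : ℕ) := hξ
  -- `L/F` is a cyclotomic extension
  have halg : Algebra.adjoin F ({ξ} : Set L) = ⊤ := by
    have hint : IsIntegral F ξ := ⟨Polynomial.X ^ (p ^ N) - Polynomial.C 1,
      Polynomial.monic_X_pow_sub_C 1 hpN.ne', by simp [hξ.pow_eq_one]⟩
    rw [← IntermediateField.adjoin_simple_toSubalgebra_of_isAlgebraic hint.isAlgebraic, hL]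
    rfl
  haveI hLcyc : IsCyclotomicExtension {((nN : ℕ+) : ℕ)} F L := by
    rw [IsCyclotomicExtension.iff_singleton]
    refine ⟨⟨ξ, hξ'⟩, fun x => ?_⟩
    have hle : Algebra.adjoin F ({ξ} : Set L)
        ≤ Algebra.adjoin F {b : L | b ^ ((nN : ℕ+) : ℕ) = 1} :=
      Algebra.adjoin_mono (by simpa using hξ'.pow_eq_one)
    exact hle (halg ▸ Algebra.mem_top)
  haveI : IsGalois F L := IsCyclotomicExtension.isGalois {((nN : ℕ+) : ℕ)} F L
  -- the Galois group is commutative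
  have hcomm : ∀ g h : L ≃ₐ[F] L, g * h = h * g := fun g h =>
    hξ'.autToPow_injective F (by rw [map_mul, map_mul, mul_comm])
  -- the quadratic subfield analysis: find `g₀` whose cyclotomic value has order `> 2`
  set E := IntermediateField.adjoin F ({ζ} : Set L) with hE
  have hζE : ζ ∈ E := IntermediateField.subset_adjoin F {ζ} rfl
  set ζ' : E := ⟨ζ, hζE⟩ with hζ'def
  have hζ'prim : IsPrimitiveRoot ζ' ((n1 : ℕ+) : ℕ) := by
    rwa [← IsPrimitiveRoot.coe_submonoidClass_iff]
  have hint : IsIntegral F ζ := ⟨Polynomial.X ^ p - Polynomial.C 1,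
    Polynomial.monic_X_pow_sub_C 1 hp.pos.ne', by simp [hζ.pow_eq_one]⟩
  have hts : E.toSubalgebra = Algebra.adjoin F ({ζ} : Set L) :=
    IntermediateField.adjoin_simple_toSubalgebra_of_isAlgebraic hint.isAlgebraic
  haveI hEcyc : IsCyclotomicExtension {((n1 : ℕ+) : ℕ)} F E := by
    haveI := hζ.adjoin_isCyclotomicExtension F (n := ((n1 : ℕ+) : ℕ))
    exact IsCyclotomicExtension.equiv {((n1 : ℕ+) : ℕ)} F _ (Subalgebra.equivOfEq _ _ hts.symm)
  haveI : IsGalois F E := IsCyclotomicExtension.isGalois {((n1 : ℕ+) : ℕ)} F E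
  haveI : FiniteDimensional F E := IntermediateField.adjoin.finiteDimensional hint
  let ρ : (E ≃ₐ[F] E) →* (ZMod p)ˣ := hζ'prim.autToPow F
  have hρinj : Function.Injective ρ := hζ'prim.autToPow_injective F
  let φ := ρ.comp (AlgEquiv.restrictNormalHom (F := F) (K₁ := L) E)
  have hrange : Set.range ⇑φ = Set.range ⇑ρ := by
    have h0 : ⇑φ = ⇑ρ ∘ ⇑(AlgEquiv.restrictNormalHom (F := F) (K₁ := L) E) := rfl
    rw [h0, Function.Surjective.range_comp (AlgEquiv.restrictNormalHom_surjective L)]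
  have hcard : Nat.card (Set.range ⇑φ) = Module.finrank F E := by
    rw [hrange, Nat.card_range_of_injective hρinj,
      IsGalois.card_aut_eq_finrank]
  have h4' : 4 ∣ Nat.card (Set.range ⇑φ) := by rw [hcard]; exact h4
  have hex : ∃ g : L ≃ₐ[F] L, ((φ g : (ZMod p)ˣ) : ZMod p) ^ 2 ≠ 1 := by
    by_contra hcon
    push_neg at hcon
    have hsub : Set.range ⇑φ ⊆ {1, -1} := by
      rintro _ ⟨g, rfl⟩
      have h1 := hcon g
      rw [sq] at h1
      rcases mul_self_eq_one_iff.mp h1 with h | h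
      · exact Or.inl (Units.ext h)
      · exact Or.inr (Units.ext (by rw [h, Units.val_neg, Units.val_one]))
    have hle : Nat.card (Set.range ⇑φ) ≤ 2 := by
      rw [Nat.card_coe_set_eq]
      refine le_trans (Set.ncard_le_ncard hsub (Set.toFinite _)) ?_
      exact le_trans (Set.ncard_insert_le _ _) (by simp)
    have hpos : 0 < Nat.card (Set.range ⇑φ) := by rw [hcard]; exact Module.finrank_pos
    have := Nat.le_of_dvd hpos h4'
    omega
  obtain ⟨g₀, hg₀⟩ := hex
  set m : ℕ := ((φ g₀ : (ZMod p)ˣ) : ZMod p).val with hm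
  have hspec : ζ' ^ m = (AlgEquiv.restrictNormalHom (F := F) (K₁ := L) E g₀) ζ' :=
    hζ'prim.autToPow_spec F _
  have hg₀ζ : g₀ ζ = ζ ^ m := by
    have h1 : (algebraMap E L) (((AlgEquiv.restrictNormalHom (F := F) (K₁ := L) E) g₀) ζ')
        = g₀ ((algebraMap E L) ζ') := AlgEquiv.restrictNormal_commutes g₀ E ζ'
    rw [← hspec, map_pow] at h1
    exact h1.symm
  have hmZ : ((m : ZMod p)) ^ 2 ≠ 1 := by
    rwa [hm, ZMod.natCast_val, ZMod.cast_id]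
  -- transfer to `k`
  have hεg₀ : ((ε g₀ : kˣ) : k) = (m : k) := hε g₀ m hg₀ζ
  have hεsq : ((ε g₀ : kˣ) : k) ^ 2 ≠ 1 := by
    intro hsq
    apply hmZ
    have hψ : (ZMod.castHom (dvd_refl p) k) ((m : ZMod p) ^ 2)
        = (ZMod.castHom (dvd_refl p) k) 1 := by
      rw [map_pow, map_natCast, map_one, ← hεg₀, hsq]
    exact (ZMod.castHom (dvd_refl p) k).injective hψ
  -- the twisted character
  set χ : (L ≃ₐ[F] L) → k := fun g => ((δ g : kˣ) : k) * ((ε g : kˣ) : k) with hχ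
  have hχg₀ : χ g₀ ≠ 1 := by
    intro h1
    rcases hδ2 g₀ with hd | hd
    · rw [hχ] at h1; simp only [hd, one_mul] at h1
      exact hεsq (by rw [h1, one_pow])
    · rw [hχ] at h1; simp only [hd] at h1
      have h2 : ((ε g₀ : kˣ) : k) = -1 := by linear_combination -h1
      exact hεsq (by rw [h2, neg_one_sq])
  -- coboundary
  refine ⟨f g₀ / (χ g₀ - 1), fun g => ?_⟩
  have e1 : f (g₀ * g) = f g + χ g * f g₀ := by rw [← hcomm g g₀]; exact hf g g₀
  have e2 : f (g₀ * g) = f g₀ + χ g₀ * f g := hf g₀ g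
  have key : f g * (χ g₀ - 1) = f g₀ * (χ g - 1) := by
    have h12 := e1.symm.trans e2
    linear_combination -h12
  have hne : χ g₀ - 1 ≠ 0 := sub_ne_zero.mpr hχg₀
  have : ((δ g : kˣ) : k) * ((ε g : kˣ) : k) = χ g := rfl
  rw [this]
  field_simp
  linear_combination key
end

section
/- K is totally real if and only if 4 divides [F(ζ_p) : F]. In particular, if K is totally real then p ≡ 1 (mod 4). -/
/-- In a finite cyclic group with generator `g`, an element of order 2 equals `g ^ (card/2)`. -/
private lemma aux_unique_order_two {G : Type*} [Group G] [Fintype G]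
    (g : G) (hg : ∀ x : G, x ∈ Subgroup.zpowers g)
    (c : G) (hc : orderOf c = 2) :
    c = g ^ (Fintype.card G / 2) := by
  have hpos : 0 < Fintype.card G := Fintype.card_pos
  have hgord : orderOf g = Fintype.card G := by
    rw [← Nat.card_eq_fintype_card]; exact orderOf_eq_card_of_forall_mem_zpowers hg
  have h2n : 2 ∣ Fintype.card G := hc ▸ orderOf_dvd_card
  obtain ⟨m, hm⟩ := h2n
  have hm2 : Fintype.card G / 2 = m := by omega
  rw [hm2]
  have hc2 : c ^ (2 : ℕ) = 1 := hc ▸ pow_orderOf_eq_one c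
  obtain ⟨k, hk⟩ := Subgroup.mem_zpowers_iff.1 (hg c)
  have h2k : g ^ (2 * k) = 1 := by
    rw [mul_comm, zpow_mul, hk]
    exact_mod_cast hc2
  have hdvd : ((Fintype.card G : ℕ) : ℤ) ∣ 2 * k := by
    rw [← hgord]; exact orderOf_dvd_iff_zpow_eq_one.2 h2k
  obtain ⟨t, ht⟩ := hdvd
  have hkt : k = (m : ℤ) * t := by
    have hcast : (Fintype.card G : ℤ) = 2 * m := by exact_mod_cast congrArg Nat.cast hm
    rw [hcast] at ht; linarith
  have hch : c = (g ^ m) ^ t := by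
    rw [← hk, hkt, ← zpow_natCast g m, ← zpow_mul]
  have hsq : (g ^ m) ^ (2 : ℕ) = 1 := by
    rw [← pow_mul]
    have hmm : m * 2 = Fintype.card G := by omega
    rw [hmm, pow_card_eq_one]
  have hne : g ^ m ≠ 1 := by
    intro h1
    have hdm : orderOf g ∣ m := orderOf_dvd_of_pow_eq_one h1
    rw [hgord] at hdm
    have := Nat.le_of_dvd (by omega) hdm
    omega
  have hord : orderOf (g ^ m) = 2 := by
    have hdvd2 : orderOf (g ^ m) ∣ 2 := orderOf_dvd_of_pow_eq_one hsq
    rcases (Nat.dvd_prime Nat.prime_two).1 hdvd2 with h | h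
    · exact absurd (orderOf_eq_one_iff.1 h) hne
    · exact h
  have hmod := zpow_mod_orderOf (g ^ m) t
  rw [hord] at hmod
  norm_cast at hmod
  rcases Int.emod_two_eq_zero_or_one t with h | h
  · rw [h] at hmod
    simp only [zpow_zero] at hmod
    rw [hch, ← hmod] at hc
    simp at hc
  · rw [h, zpow_one] at hmod
    rw [hch, ← hmod]

private lemma aux_mem_index_two {G : Type*} [Group G] [Fintype G]
    (hcomm : ∀ a b : G, a * b = b * a)
    (g : G) (hg : ∀ x : G, x ∈ Subgroup.zpowers g)
    (H : Subgroup G) (hH : H.index = 2)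
    (c : G) (hc : orderOf c = 2) :
    c ∈ H ↔ 4 ∣ Fintype.card G := by
  haveI hnormal : H.Normal := ⟨fun x hx gg => by
    rw [hcomm gg x, mul_assoc, mul_inv_cancel, mul_one]; exact hx⟩
  have hceq := aux_unique_order_two g hg c hc
  have hcardQ : Nat.card (G ⧸ H) = 2 := (H.index_eq_card).symm.trans hH
  have h2n : 2 ∣ Fintype.card G := by
    rw [← hH, ← Nat.card_eq_fintype_card]; exact Subgroup.index_dvd_card (H := H)
  set π := QuotientGroup.mk' H with hπ
  have hsqmem : ∀ x : G, x ^ (2 : ℕ) ∈ H := by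
    intro x
    have h1 : π x ^ Nat.card (G ⧸ H) = 1 := pow_card_eq_one'
    rw [hcardQ] at h1
    have h2 : π (x ^ (2 : ℕ)) = 1 := by rw [map_pow]; exact h1
    exact (QuotientGroup.eq_one_iff _).1 h2
  constructor
  · intro hcH
    have hqne : π g ≠ 1 := by
      intro h1
      have hgH : g ∈ H := (QuotientGroup.eq_one_iff _).1 h1
      have hall : ∀ x : G, x ∈ H := by
        intro x
        obtain ⟨k, hk⟩ := Subgroup.mem_zpowers_iff.1 (hg x)
        rw [← hk]
        exact Subgroup.zpow_mem H hgH k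
      have htop : H = ⊤ := by ext x; simp [hall x]
      rw [htop, Subgroup.index_top] at hH
      omega
    have hqord : orderOf (π g) = 2 := by
      have hdvd2 : orderOf (π g) ∣ 2 := by
        rw [← hcardQ]; exact orderOf_dvd_natCard (π g)
      rcases (Nat.dvd_prime Nat.prime_two).1 hdvd2 with h | h
      · exact absurd (orderOf_eq_one_iff.1 h) hqne
      · exact h
    have hpow : π g ^ (Fintype.card G / 2) = 1 := by
      rw [← map_pow]
      exact (QuotientGroup.eq_one_iff _).2 (hceq ▸ hcH)
    have h2d : orderOf (π g) ∣ Fintype.card G / 2 := orderOf_dvd_of_pow_eq_one hpow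
    rw [hqord] at h2d
    omega
  · intro h4
    have hm2 : Fintype.card G / 2 = (Fintype.card G / 4) * 2 := by omega
    rw [hceq, hm2, pow_mul]
    exact hsqmem _

/-- A real `p`-th root of unity, `p` odd, equals 1. -/
private lemma aux_real_root {z : ℂ} {p : ℕ} (hodd : Odd p) (hz : z ^ p = 1) (him : z.im = 0) :
    z = 1 := by
  have hzr : ((z.re : ℝ) : ℂ) = z := by
    apply Complex.ext <;> simp [him]
  have h1 : ((z.re ^ p : ℝ) : ℂ) = ((1 : ℝ) : ℂ) := by
    push_cast
    rw [hzr, hz]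
  have h2 : z.re ^ p = 1 := by exact_mod_cast h1
  have h3 : z.re = 1 := by
    have hinj := (Odd.strictMono_pow (R := ℝ) hodd).injective
    apply hinj
    simpa using h2
  rw [← hzr, h3]; norm_num


private lemma aux_exists_conj {F L : Type} [Field F] [Field L] [Algebra F L]
    [FiniteDimensional F L] [Normal F L]
    (htrF : ∀ φ : F →+* ℂ, ∀ x : F, (φ x).im = 0)
    (Φ : L →+* ℂ) :
    ∃ c : L ≃ₐ[F] L, ∀ x : L, Φ (c x) = (starRingEnd ℂ) (Φ x) := by
  letI : Algebra L ℂ := Φ.toAlgebra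
  letI : Algebra F ℂ := (Φ.comp (algebraMap F L)).toAlgebra
  letI : IsScalarTower F L ℂ := IsScalarTower.of_algebraMap_eq fun x => rfl
  let ψ : L →ₐ[F] ℂ :=
    { toRingHom := (starRingEnd ℂ).comp Φ
      commutes' := fun r => by
        have h := htrF (Φ.comp (algebraMap F L)) r
        show (starRingEnd ℂ) (Φ (algebraMap F L r)) = algebraMap F ℂ r
        rw [show Φ ((algebraMap F L) r) = (Φ.comp (algebraMap F L)) r from rfl,
          Complex.conj_eq_iff_im.2 h]
        rfl }
  refine ⟨AlgHom.restrictNormal' ψ L, fun x => ?_⟩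
  have h := AlgHom.restrictNormal_commutes ψ L x
  have h2 : (AlgHom.restrictNormal' ψ L) x = AlgHom.restrictNormal ψ L x := rfl
  rw [h2]
  have h3 : algebraMap L ℂ (AlgHom.restrictNormal ψ L x) = Φ (AlgHom.restrictNormal ψ L x) := rfl
  rw [← h3, h]
  simp [ψ]

/-- let `F` be a totally real number field and `p` an odd prime such that
`[F(ζ_p) : F]` is even, and let `K` be the unique intermediate field of `F(ζ_p)/F` with
`[K : F] = 2`.  Then `K` is totally real (every embedding `K → ℂ` has real image) if and
only if `4` divides `[F(ζ_p) : F]`; in particular, if `K` is totally real then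
`p ≡ 1 (mod 4)`. -/
theorem quadratic_subfield_totally_real_iff_four_dvd_degree
    {F L : Type} [Field F] [NumberField F]
    (htrF : ∀ φ : F →+* ℂ, ∀ x : F, (φ x).im = 0)
    (p : ℕ) (hp : p.Prime) (hp2 : p ≠ 2)
    [Field L] [Algebra F L] [FiniteDimensional F L]
    (ζ : L) (hζ : IsPrimitiveRoot ζ p)
    (hL : IntermediateField.adjoin F {ζ} = ⊤)
    (heven : 2 ∣ Module.finrank F L)
    (K : IntermediateField F L) (hK : Module.finrank F K = 2) :
    ((∀ φ : K →+* ℂ, ∀ x : K, (φ x).im = 0) ↔ 4 ∣ Module.finrank F L)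
    ∧ ((∀ φ : K →+* ℂ, ∀ x : K, (φ x).im = 0) → p % 4 = 1) := by
  classical
  have hp1 : 1 < p := hp.one_lt
  haveI : Fact p.Prime := ⟨hp⟩
  haveI : NeZero p := ⟨hp.pos.ne'⟩
  have hodd : Odd p := hp.odd_of_ne_two hp2
  -- cyclotomic extension instance
  have hζint : IsIntegral F ζ := IsIntegral.of_finite F ζ
  have hadj : Algebra.adjoin F {ζ} = ⊤ := by
    have h1 := IntermediateField.adjoin_simple_toSubalgebra_of_isAlgebraic hζint.isAlgebraic
    rw [hL] at h1
    rw [← h1]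
    rfl
  set pn : ℕ+ := ⟨p, hp.pos⟩ with hpn
  have hζ' : IsPrimitiveRoot ζ ((pn : ℕ+) : ℕ) := hζ
  haveI hcycext : IsCyclotomicExtension {(pn : ℕ)} F L := by
    rw [IsCyclotomicExtension.iff_adjoin_eq_top]
    refine ⟨fun m hm _ => ?_, ?_⟩
    · rw [Set.mem_singleton_iff] at hm; subst hm; exact ⟨ζ, hζ'⟩
    · rw [eq_top_iff, ← hadj]
      apply Algebra.adjoin_mono
      rintro x hx
      rw [Set.mem_singleton_iff] at hx; subst hx
      exact ⟨pn, Set.mem_singleton _, hp.pos.ne', hζ.pow_eq_one⟩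
  haveI : IsGalois F L := IsCyclotomicExtension.isGalois {(pn : ℕ)} F L
  have hcardG : Fintype.card (L ≃ₐ[F] L) = Module.finrank F L := Nat.card_eq_fintype_card (α := L ≃ₐ[F] L) ▸ IsGalois.card_aut_eq_finrank F L
  -- the Galois group is commutative and cyclic
  have hinj : Function.Injective (hζ'.autToPow F) := hζ'.autToPow_injective F
  have hcomm : ∀ a b : L ≃ₐ[F] L, a * b = b * a := fun a b =>
    hinj (by rw [map_mul, map_mul, mul_comm])
  have hcyc : IsCyclic (L ≃ₐ[F] L) := by
    haveI : Fact ((pn : ℕ)).Prime := ⟨hp⟩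
    haveI : NeZero ((pn : ℕ)) := ⟨hp.pos.ne'⟩
    haveI : IsCyclic (ZMod ((pn : ℕ)))ˣ := inferInstance
    haveI : IsCyclic ((hζ'.autToPow F).range) := Subgroup.isCyclic _
    have e := MonoidHom.ofInjective hinj
    exact isCyclic_of_surjective e.symm e.symm.surjective
  obtain ⟨g, hg⟩ := hcyc.exists_generator
  -- the fixing subgroup of K has index 2
  set H : Subgroup (L ≃ₐ[F] L) := K.fixingSubgroup with hHdef
  have hHcard : Nat.card H = Module.finrank (↥K) L := by
    exact IsGalois.card_fixingSubgroup_eq_finrank K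
  have hrank : Module.finrank F (↥K) * Module.finrank (↥K) L = Module.finrank F L :=
    Module.finrank_mul_finrank F (↥K) L
  have hKLpos : 0 < Module.finrank (↥K) L := Module.finrank_pos
  have hidx : H.index = 2 := by
    have h1 := Subgroup.index_mul_card H
    rw [hHcard, Nat.card_eq_fintype_card, hcardG, ← hrank, hK] at h1
    exact Nat.eq_of_mul_eq_mul_right hKLpos h1
  -- key equivalence, for any embedding of L into ℂ
  have hkey : ∀ Φ : L →+* ℂ, ((∀ x : ↥K, (Φ x).im = 0) ↔ 4 ∣ Module.finrank F L) := by
    intro Φ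
    obtain ⟨c, hcΦ⟩ := aux_exists_conj htrF Φ
    have hc2 : c ^ (2 : ℕ) = 1 := by
      apply AlgEquiv.ext
      intro x
      apply Φ.injective
      have : (c ^ (2 : ℕ)) x = c (c x) := by rw [pow_two]; rfl
      rw [this, hcΦ, hcΦ, Complex.conj_conj]
      rfl
    have hcne : c ≠ 1 := by
      intro h1
      have h2 : Φ (c ζ) = Φ ζ := by rw [h1]; rfl
      rw [hcΦ] at h2
      have him : (Φ ζ).im = 0 := Complex.conj_eq_iff_im.1 h2
      have hpow : (Φ ζ) ^ p = 1 := by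
        rw [← map_pow, hζ.pow_eq_one, map_one]
      have : Φ ζ = 1 := aux_real_root hodd hpow him
      rw [show (1 : ℂ) = Φ 1 from (map_one Φ).symm] at this
      exact hζ.ne_one hp1 (Φ.injective this)
    have hcord : orderOf c = 2 := by
      have hdvd2 : orderOf c ∣ 2 := orderOf_dvd_of_pow_eq_one hc2
      rcases (Nat.dvd_prime Nat.prime_two).1 hdvd2 with h | h
      · exact absurd (orderOf_eq_one_iff.1 h) hcne
      · exact h
    have hmem : c ∈ H ↔ ∀ x : ↥K, (Φ x).im = 0 := by
      constructor
      · intro hcK x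
        have hfix : c (x : L) = (x : L) := hcK ⟨(x : L), x.2⟩
        rw [← Complex.conj_eq_iff_im, ← hcΦ, hfix]
      · intro hreal
        intro y
        show c (y : L) = (y : L)
        apply Φ.injective
        rw [hcΦ, Complex.conj_eq_iff_im.2 (hreal ⟨(y : L), y.2⟩)]
    rw [← hmem, aux_mem_index_two hcomm g hg H hidx c hcord, hcardG]
  -- transfer to embeddings of K
  haveI : CharZero L := charZero_of_injective_algebraMap (algebraMap F L).injective
  haveI : IsScalarTower ℚ F L := IsScalarTower.of_algebraMap_eq' (Subsingleton.elim _ _)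
  haveI : FiniteDimensional ℚ L := Module.Finite.trans F L
  have hAiff : (∀ φ : ↥K →+* ℂ, ∀ x : ↥K, (φ x).im = 0) ↔ 4 ∣ Module.finrank F L := by
    constructor
    · intro hA
      let Φ₀ : L →+* ℂ := (IsAlgClosed.lift (M := ℂ) (R := ℚ) (S := L)).toRingHom
      refine (hkey Φ₀).1 ?_
      intro x
      exact hA (Φ₀.comp (algebraMap (↥K) L)) x
    · intro h4 φ x
      haveI hfdKL : FiniteDimensional (↥K) L := Module.Finite.right F (↥K) L
      letI : Algebra (↥K) ℂ := φ.toAlgebra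
      haveI : FaithfulSMul (↥K) ℂ := (faithfulSMul_iff_algebraMap_injective _ _).2 φ.injective
      haveI : Algebra.IsAlgebraic (↥K) L := Algebra.IsAlgebraic.of_finite (↥K) L
      let Φa : L →ₐ[↥K] ℂ := IsAlgClosed.lift
      let Φ1 : L →+* ℂ := Φa.toRingHom
      have hx : Φ1 ((x : L)) = φ x := Φa.commutes x
      rw [← hx]
      exact (hkey Φ1).2 h4 x
  refine ⟨hAiff, fun hA => ?_⟩
  have h4 := hAiff.1 hA
  -- degree divides p - 1
  have hdvd : Module.finrank F L ∣ p - 1 := by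
    have h1 : Nat.card (L ≃ₐ[F] L) ∣ Nat.card (ZMod p)ˣ :=
      Subgroup.card_dvd_of_injective _ hinj
    rw [Nat.card_eq_fintype_card, Nat.card_eq_fintype_card, hcardG,
      ZMod.card_units_eq_totient, Nat.totient_prime hp] at h1
    exact h1
  have h41 : 4 ∣ p - 1 := h4.trans hdvd
  omega
end
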